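/- Fix c ∈ [0,1] with k(c) > 0. Then x₀(c) > 0, H(x; c) > 0 for every x ≥ x₀(c), and there exists a unique real number β with H(β; c) = 0; moreover this unique zero satisfies β < x₀(c). -/

import Mathlib

open MeasureTheory Real Set Filter Metric

/-- The (positive multiple of the) strictly decreasing fundamental solution `φ_λ` of the
Ornstein–Uhlenbeck equation `(1/2)σ² f'' + θ(μ - x) f' = λ f`, written as the integral
`φ(x) = ∫₀^∞ t^(λ/θ - 1) exp(-t²/2 - a t (x - μ)) dt` with `a = √(2θ)/σ`. -/
noncomputable def OUphi (lam th mu sig : ℝ) (x : ℝ) : ℝ :=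
  ∫ t in Set.Ioi (0:ℝ),
    t ^ (lam / th - 1) * Real.exp (-t ^ 2 / 2 - Real.sqrt (2 * th) / sig * t * (x - mu))

/-- `k(c) = λ + θ + λ Φ'(c)`. -/
noncomputable def kfun (lam th : ℝ) (Phi : ℝ → ℝ) (c : ℝ) : ℝ :=
  lam + th + lam * deriv Phi c

/-- `G(x; c) = μ(k(c) - θ)/λ + k(c)(x - μ)/(λ + θ)`. -/
noncomputable def Gfun (lam th mu : ℝ) (Phi : ℝ → ℝ) (x c : ℝ) : ℝ :=
  mu * (kfun lam th Phi c - th) / lam + kfun lam th Phi c * (x - mu) / (lam + th)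

/-- `x₀(c) = -θμΦ'(c)/k(c)`. -/
noncomputable def x0fun (lam th mu : ℝ) (Phi : ℝ → ℝ) (c : ℝ) : ℝ :=
  -(th * mu * deriv Phi c) / kfun lam th Phi c

/-- The smooth-fit function `H(x;c) = (k(c)/(λ+θ)) φ(x) - G(x;c) φ'(x)`. -/
noncomputable def Hfun (lam th mu sig : ℝ) (Phi : ℝ → ℝ) (x c : ℝ) : ℝ :=
  kfun lam th Phi c / (lam + th) * OUphi lam th mu sig x
    - Gfun lam th mu Phi x c * deriv (OUphi lam th mu sig) x

/-! ### Auxiliary development -/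

/-- The parametric integral `∫₀^∞ t^p exp(-t²/2 - A t (x - μ)) dt`. -/
noncomputable def PInt (p A mu : ℝ) (x : ℝ) : ℝ :=
  ∫ t in Set.Ioi (0:ℝ), t ^ p * Real.exp (-t ^ 2 / 2 - A * t * (x - mu))

lemma OUphi_eq_PInt (lam th mu sig : ℝ) :
    OUphi lam th mu sig = PInt (lam / th - 1) (Real.sqrt (2 * th) / sig) mu := rfl

lemma integ_aux {p : ℝ} (hp : -1 < p) (c : ℝ) :
    IntegrableOn (fun t : ℝ => t ^ p * Real.exp (-t ^ 2 / 2 + c * t)) (Ioi 0) := by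
  have hg : IntegrableOn (fun t : ℝ => Real.exp (c ^ 2) * (t ^ p * Real.exp (-(1/4) * t ^ 2)))
      (Ioi 0) := (integrableOn_rpow_mul_exp_neg_mul_sq (by norm_num) hp).const_mul _
  refine Integrable.mono' hg ?_ ?_
  · refine ContinuousOn.aestronglyMeasurable ?_ measurableSet_Ioi
    exact (continuousOn_id.rpow_const fun t ht => Or.inl (ne_of_gt ht)).mul
      (Continuous.continuousOn (by continuity))
  · filter_upwards [ae_restrict_mem measurableSet_Ioi] with t ht
    have ht0 : (0:ℝ) < t := ht
    rw [Real.norm_eq_abs, abs_of_nonneg (mul_nonneg (Real.rpow_nonneg ht0.le p)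
      (Real.exp_nonneg _))]
    have h1 : Real.exp (-t ^ 2 / 2 + c * t) ≤ Real.exp (c ^ 2) * Real.exp (-(1/4) * t ^ 2) := by
      rw [← Real.exp_add]
      apply Real.exp_le_exp.mpr
      nlinarith [sq_nonneg (t / 2 - c)]
    have := mul_le_mul_of_nonneg_left h1 (le_of_lt (Real.rpow_pos_of_pos ht0 p))
    linarith

lemma PInt_shape (p A mu x : ℝ) :
    (fun t : ℝ => t ^ p * Real.exp (-t ^ 2 / 2 - A * t * (x - mu)))
      = fun t : ℝ => t ^ p * Real.exp (-t ^ 2 / 2 + (A * (mu - x)) * t) := by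
  funext t
  rw [show -t ^ 2 / 2 - A * t * (x - mu) = -t ^ 2 / 2 + (A * (mu - x)) * t from by ring]

lemma integ_PInt {p : ℝ} (hp : -1 < p) (A mu x : ℝ) :
    IntegrableOn (fun t : ℝ => t ^ p * Real.exp (-t ^ 2 / 2 - A * t * (x - mu))) (Ioi 0) := by
  rw [PInt_shape]; exact integ_aux hp _

lemma integral_Ioi_pos {f : ℝ → ℝ} (hf : IntegrableOn f (Ioi 0))
    (hpos : ∀ t ∈ Ioi (0:ℝ), 0 < f t) : 0 < ∫ t in Ioi (0:ℝ), f t := by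
  have hnn : 0 ≤ᵐ[volume.restrict (Ioi (0:ℝ))] f := by
    filter_upwards [ae_restrict_mem measurableSet_Ioi] with t ht
    exact (hpos t ht).le
  rw [setIntegral_pos_iff_support_of_nonneg_ae hnn hf]
  have hsub : Ioi (0:ℝ) ⊆ Function.support f ∩ Ioi 0 :=
    fun t ht => ⟨ne_of_gt (hpos t ht), ht⟩
  calc (0:ENNReal) < volume (Ioi (0:ℝ)) := by simp [Real.volume_Ioi]
  _ ≤ volume (Function.support f ∩ Ioi 0) := measure_mono hsub

lemma PInt_pos {p : ℝ} (hp : -1 < p) (A mu x : ℝ) : 0 < PInt p A mu x := by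
  refine integral_Ioi_pos (integ_PInt hp A mu x) fun t ht => ?_
  exact mul_pos (Real.rpow_pos_of_pos ht p) (Real.exp_pos _)

lemma cont_integrand (p A mu x : ℝ) :
    ContinuousOn (fun t : ℝ => t ^ p * Real.exp (-t ^ 2 / 2 - A * t * (x - mu))) (Ioi 0) :=
  (continuousOn_id.rpow_const fun t ht => Or.inl (ne_of_gt ht)).mul
    (Continuous.continuousOn (by continuity))

lemma hasDerivAt_PInt {p : ℝ} (hp : -1 < p) {A : ℝ} (hA : 0 < A) (mu x₀ : ℝ) :
    HasDerivAt (PInt p A mu) (-A * PInt (p + 1) A mu x₀) x₀ := by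
  have key := hasDerivAt_integral_of_dominated_loc_of_deriv_le
    (μ := volume.restrict (Ioi 0))
    (F := fun x t => t ^ p * Real.exp (-t ^ 2 / 2 - A * t * (x - mu)))
    (F' := fun x t => -(A * t) * (t ^ p * Real.exp (-t ^ 2 / 2 - A * t * (x - mu))))
    (x₀ := x₀)
    (bound := fun t => A * (t ^ (p + 1) * Real.exp (-t ^ 2 / 2 + (A * (mu - x₀ + 1)) * t)))
    (ball_mem_nhds x₀ one_pos)
    (Eventually.of_forall fun x =>
      (cont_integrand p A mu x).aestronglyMeasurable measurableSet_Ioi)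
    (integ_PInt hp A mu x₀)
    ((Continuous.continuousOn (by continuity)).mul
      (cont_integrand p A mu x₀) |>.aestronglyMeasurable measurableSet_Ioi)
    ?_ ((integ_aux (by linarith : (-1:ℝ) < p + 1) (A * (mu - x₀ + 1))).const_mul A) ?_
  · have h2 := key.2
    have heq : (∫ t in Ioi (0:ℝ),
        -(A * t) * (t ^ p * Real.exp (-t ^ 2 / 2 - A * t * (x₀ - mu))))
        = -A * PInt (p + 1) A mu x₀ := by
      rw [show -A * PInt (p+1) A mu x₀
          = ∫ t in Ioi (0:ℝ), -A * (t ^ (p+1) * Real.exp (-t ^ 2 / 2 - A * t * (x₀ - mu))) from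
          (integral_const_mul _ _).symm]
      refine setIntegral_congr_fun measurableSet_Ioi fun t ht => ?_
      rw [Real.rpow_add_one (ne_of_gt ht)]
      ring
    rw [heq] at h2
    exact h2
  · filter_upwards [ae_restrict_mem measurableSet_Ioi] with t ht x hx
    have ht0 : (0:ℝ) < t := ht
    have hxd := abs_lt.mp (show |x - x₀| < 1 by rwa [mem_ball, Real.dist_eq] at hx)
    have hnn : 0 ≤ t ^ p * Real.exp (-t ^ 2 / 2 - A * t * (x - mu)) :=
      mul_nonneg (Real.rpow_nonneg ht0.le p) (Real.exp_nonneg _)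
    show ‖-(A * t) * (t ^ p * Real.exp (-t ^ 2 / 2 - A * t * (x - mu)))‖
      ≤ A * (t ^ (p + 1) * Real.exp (-t ^ 2 / 2 + (A * (mu - x₀ + 1)) * t))
    rw [Real.norm_eq_abs, abs_mul, abs_neg, abs_mul, abs_of_pos hA, abs_of_pos ht0,
      abs_of_nonneg hnn, Real.rpow_add_one (ne_of_gt ht0)]
    have hexp : Real.exp (-t ^ 2 / 2 - A * t * (x - mu))
        ≤ Real.exp (-t ^ 2 / 2 + (A * (mu - x₀ + 1)) * t) := by
      apply Real.exp_le_exp.mpr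
      nlinarith [mul_nonneg (mul_pos hA ht0).le (show (0:ℝ) ≤ x - x₀ + 1 by linarith [hxd.1])]
    calc A * t * (t ^ p * Real.exp (-t ^ 2 / 2 - A * t * (x - mu)))
        ≤ A * t * (t ^ p * Real.exp (-t ^ 2 / 2 + (A * (mu - x₀ + 1)) * t)) := by
          apply mul_le_mul_of_nonneg_left _ (by positivity)
          exact mul_le_mul_of_nonneg_left hexp (Real.rpow_nonneg ht0.le p)
      _ = A * (t ^ p * t * Real.exp (-t ^ 2 / 2 + (A * (mu - x₀ + 1)) * t)) := by ring
  · filter_upwards [ae_restrict_mem measurableSet_Ioi] with t ht x hx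
    have h1 : HasDerivAt (fun x : ℝ => -t ^ 2 / 2 - A * t * (x - mu)) (0 - A * t * 1) x :=
      (hasDerivAt_const x (-t ^ 2 / 2)).sub (((hasDerivAt_id x).sub_const mu).const_mul (A * t))
    have h2 := (h1.exp).const_mul (t ^ p)
    convert h2 using 1
    · rfl
    ring

lemma PInt_lower {ν A mu x : ℝ} (hν : 0 ≤ ν) (hA : 0 < A) (hx : x ≤ mu) :
    Real.exp (A * (mu - x) - 2) ≤ PInt ν A mu x := by
  have hr : 0 ≤ A * (mu - x) := mul_nonneg hA.le (by linarith)
  have hint : IntegrableOn (fun t : ℝ => t ^ ν * Real.exp (-t ^ 2 / 2 - A * t * (x - mu)))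
      (Ioi 0) := integ_PInt (by linarith) A mu x
  have hnn : 0 ≤ᵐ[volume.restrict (Ioi (0:ℝ))]
      fun t : ℝ => t ^ ν * Real.exp (-t ^ 2 / 2 - A * t * (x - mu)) := by
    filter_upwards [ae_restrict_mem measurableSet_Ioi] with t ht
    exact mul_nonneg (Real.rpow_nonneg (le_of_lt ht) ν) (Real.exp_nonneg _)
  have h1 : (∫ t in Ioc (1:ℝ) 2, t ^ ν * Real.exp (-t ^ 2 / 2 - A * t * (x - mu)))
      ≤ PInt ν A mu x := by
    apply setIntegral_mono_set hint hnn
    refine HasSubset.Subset.eventuallyLE fun t ht => ?_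
    exact lt_of_lt_of_le one_pos ht.1.le
  refine le_trans ?_ h1
  have h2 : (∫ t in Ioc (1:ℝ) 2, Real.exp (A * (mu - x) - 2))
      ≤ ∫ t in Ioc (1:ℝ) 2, t ^ ν * Real.exp (-t ^ 2 / 2 - A * t * (x - mu)) := by
    apply setIntegral_mono_on ((integrableOn_const_iff (by finiteness)).mpr (Or.inr (by simp)))
      (hint.mono_set fun t ht => lt_of_lt_of_le one_pos ht.1.le) measurableSet_Ioc
    intro t ht
    have h1t : (1:ℝ) ≤ t := ht.1.le
    have ht2 : t ≤ 2 := ht.2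
    have htν : (1:ℝ) ≤ t ^ ν := Real.one_le_rpow h1t hν
    have hexp : Real.exp (A * (mu - x) - 2) ≤ Real.exp (-t ^ 2 / 2 - A * t * (x - mu)) := by
      apply Real.exp_le_exp.mpr
      nlinarith [mul_nonneg hr (by linarith : (0:ℝ) ≤ t - 1)]
    calc Real.exp (A * (mu - x) - 2) ≤ 1 * Real.exp (-t ^ 2 / 2 - A * t * (x - mu)) := by
          linarith
      _ ≤ t ^ ν * Real.exp (-t ^ 2 / 2 - A * t * (x - mu)) :=
          mul_le_mul_of_nonneg_right htν (Real.exp_nonneg _)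
  refine le_trans (le_of_eq ?_) h2
  rw [setIntegral_const]
  simp [Real.volume_Ioc]
  norm_num

lemma PInt_upper {ν A mu x : ℝ} (hν : 0 < ν) (hA : 0 < A) (hx : x ≤ mu) :
    PInt (ν - 1) A mu x ≤ Real.exp (A * (mu - x)) / ν + PInt ν A mu x := by
  have hr : 0 ≤ A * (mu - x) := mul_nonneg hA.le (by linarith)
  set f : ℝ → ℝ := fun t => t ^ (ν - 1) * Real.exp (-t ^ 2 / 2 - A * t * (x - mu)) with hf
  have hint : IntegrableOn f (Ioi 0) := integ_PInt (by linarith) A mu x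
  have hintν : IntegrableOn (fun t : ℝ => t ^ ν * Real.exp (-t ^ 2 / 2 - A * t * (x - mu)))
      (Ioi 0) := integ_PInt (by linarith) A mu x
  have hsplit : PInt (ν - 1) A mu x
      = (∫ t in Ioc (0:ℝ) 1, f t) + ∫ t in Ioi (1:ℝ), f t := by
    rw [PInt, ← setIntegral_union (Ioc_disjoint_Ioi le_rfl) measurableSet_Ioi
      (hint.mono_set Ioc_subset_Ioi_self) (hint.mono_set (Ioi_subset_Ioi zero_le_one)),
      Ioc_union_Ioi_eq_Ioi zero_le_one]
  rw [hsplit]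
  have part1 : (∫ t in Ioc (0:ℝ) 1, f t) ≤ Real.exp (A * (mu - x)) / ν := by
    have hb : (∫ t in Ioc (0:ℝ) 1, f t)
        ≤ ∫ t in Ioc (0:ℝ) 1, t ^ (ν - 1) * Real.exp (A * (mu - x)) := by
      apply setIntegral_mono_on (hint.mono_set Ioc_subset_Ioi_self)
        ?_ measurableSet_Ioc
      · intro t ht
        have ht0 : (0:ℝ) < t := ht.1
        have ht1 : t ≤ 1 := ht.2
        refine mul_le_mul_of_nonneg_left ?_ (Real.rpow_nonneg ht0.le _)
        apply Real.exp_le_exp.mpr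
        nlinarith [mul_nonneg hr (by linarith : (0:ℝ) ≤ 1 - t), sq_nonneg t]
      · apply Integrable.mul_const
        rw [← IntegrableOn, ← intervalIntegrable_iff_integrableOn_Ioc_of_le zero_le_one]
        exact intervalIntegral.intervalIntegrable_rpow' (by linarith)
    refine hb.trans (le_of_eq ?_)
    have : (∫ t in Ioc (0:ℝ) 1, t ^ (ν - 1)) = 1 / ν := by
      rw [← intervalIntegral.integral_of_le zero_le_one,
        integral_rpow (Or.inl (by linarith))]
      rw [Real.zero_rpow (by linarith : ν - 1 + 1 ≠ 0), Real.one_rpow]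
      norm_num
    rw [integral_mul_const, this]
    ring
  have part2 : (∫ t in Ioi (1:ℝ), f t) ≤ PInt ν A mu x := by
    have hstep : (∫ t in Ioi (1:ℝ), f t)
        ≤ ∫ t in Ioi (1:ℝ), t ^ ν * Real.exp (-t ^ 2 / 2 - A * t * (x - mu)) := by
      apply setIntegral_mono_on (hint.mono_set (Ioi_subset_Ioi zero_le_one))
        (hintν.mono_set (Ioi_subset_Ioi zero_le_one)) measurableSet_Ioi
      intro t ht
      refine mul_le_mul_of_nonneg_right ?_ (Real.exp_nonneg _)
      exact Real.rpow_le_rpow_of_exponent_le (le_of_lt ht) (by linarith)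
    refine hstep.trans ?_
    apply setIntegral_mono_set hintν ?_
      (HasSubset.Subset.eventuallyLE (Ioi_subset_Ioi zero_le_one))
    filter_upwards [ae_restrict_mem measurableSet_Ioi] with t ht
    exact mul_nonneg (Real.rpow_nonneg (le_of_lt ht) ν) (Real.exp_nonneg _)
  linarith

lemma one_sub_mul_exp_lt {al be : ℝ} (hbe : 0 ≤ be) (h : be < al) :
    (1 - al) * Real.exp al < (1 - be) * Real.exp be := by
  have hmain : StrictAntiOn (fun u : ℝ => (1 - u) * Real.exp u) (Ici 0) := by
    apply strictAntiOn_of_deriv_neg (convex_Ici 0)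
      (Continuous.continuousOn (by continuity))
    intro u hu
    rw [interior_Ici] at hu
    have hd : HasDerivAt (fun u : ℝ => (1 - u) * Real.exp u)
        ((0 - 1) * Real.exp u + (1 - u) * Real.exp u) u :=
      ((hasDerivAt_const u (1:ℝ)).sub (hasDerivAt_id u)).mul (Real.hasDerivAt_exp u)
    rw [hd.deriv]
    have := Real.exp_pos u
    have hu0 : (0:ℝ) < u := hu
    nlinarith
  exact hmain hbe (le_trans hbe h.le) h

theorem statement5 (lam th mu sig : ℝ)
    (hlam : 0 < lam) (hth : 0 < th) (hmu : 0 < mu) (hsig : 0 < sig)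
    (Phi : ℝ → ℝ) (hPhiC2 : ContDiff ℝ 2 Phi)
    (hPhiconv : StrictConvexOn ℝ Set.univ Phi)
    (hPhi' : ∀ c ∈ Set.Icc (0:ℝ) 1, deriv Phi c < 0) (hPhi1 : Phi 1 = 0)
    (c : ℝ) (hc : c ∈ Set.Icc (0:ℝ) 1) (hk : 0 < kfun lam th Phi c) :
    0 < x0fun lam th mu Phi c ∧
    (∀ x : ℝ, x0fun lam th mu Phi c ≤ x → 0 < Hfun lam th mu sig Phi x c) ∧
    (∃! b : ℝ, Hfun lam th mu sig Phi b c = 0) ∧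
    (∀ b : ℝ, Hfun lam th mu sig Phi b c = 0 → b < x0fun lam th mu Phi c) := by
  have hD : deriv Phi c < 0 := hPhi' c hc
  have hA : 0 < Real.sqrt (2 * th) / sig :=
    div_pos (Real.sqrt_pos.mpr (by linarith)) hsig
  have hν : 0 < lam / th := div_pos hlam hth
  have hν1 : (-1:ℝ) < lam / th - 1 := by linarith
  -- abbreviations
  set A := Real.sqrt (2 * th) / sig with hAdef
  set ν := lam / th with hνdef
  set x₀ := x0fun lam th mu Phi c with hx₀def
  set K := kfun lam th Phi c with hKdef
  clear_value A ν x₀ K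
  -- x₀ > 0
  have hx₀pos : 0 < x₀ := by
    rw [hx₀def, x0fun, ← hKdef]
    apply div_pos _ hk
    nlinarith [mul_pos (mul_pos hth hmu) (neg_pos.mpr hD)]
  -- the function h
  set h : ℝ → ℝ := fun x => PInt (ν - 1) A mu x + A * (x - x₀) * PInt ν A mu x with hhdef
  clear_value h
  -- derivative of OUphi
  have hderiv : ∀ x : ℝ, deriv (OUphi lam th mu sig) x = -A * PInt ν A mu x := by
    intro x
    rw [OUphi_eq_PInt, ← hνdef, ← hAdef]
    have := (hasDerivAt_PInt hν1 hA mu x).deriv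
    rw [show ν - 1 + 1 = ν from by ring] at this
    exact this
  -- G in factored form
  have hlt : (0:ℝ) < lam + th := by linarith
  have hK0 : K ≠ 0 := ne_of_gt hk
  have hG : ∀ x : ℝ, Gfun lam th mu Phi x c = K / (lam + th) * (x - x₀) := by
    intro x
    rw [hx₀def, hKdef]
    simp only [Gfun, x0fun, kfun]
    have h1 : lam + th + lam * deriv Phi c ≠ 0 := by
      rw [hKdef, kfun] at hK0; exact hK0
    field_simp
    ring
  -- H in terms of h
  have hH : ∀ x : ℝ, Hfun lam th mu sig Phi x c = K / (lam + th) * h x := by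
    intro x
    rw [Hfun, hderiv, hG, ← hKdef, OUphi_eq_PInt, ← hAdef, ← hνdef, hhdef]
    ring
  have hKdiv : 0 < K / (lam + th) := div_pos hk hlt
  -- positivity of h for x ≥ x₀
  have hφpos : ∀ x : ℝ, 0 < PInt (ν - 1) A mu x := fun x => PInt_pos hν1 A mu x
  have hψpos : ∀ x : ℝ, 0 < PInt ν A mu x := fun x => PInt_pos (by linarith) A mu x
  have hhpos : ∀ x : ℝ, x₀ ≤ x → 0 < h x := by
    intro x hx
    have h1 := hφpos x
    have h2 : 0 ≤ A * (x - x₀) * PInt ν A mu x :=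
      mul_nonneg (mul_nonneg hA.le (by linarith)) (hψpos x).le
    rw [hhdef]
    dsimp only
    linarith
  -- strict monotonicity of h on Iic x₀
  have hrep : ∀ x : ℝ, h x = ∫ t in Ioi (0:ℝ),
      (t ^ (ν - 1) * Real.exp (-t ^ 2 / 2 - A * t * (x - mu))
        + (A * (x - x₀)) * (t ^ ν * Real.exp (-t ^ 2 / 2 - A * t * (x - mu)))) := by
    intro x
    rw [integral_add (integ_PInt hν1 A mu x)
      ((integ_PInt (by linarith : (-1:ℝ) < ν) A mu x).const_mul _), integral_const_mul,
      hhdef]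
    rfl
  have hint_g : ∀ x : ℝ, IntegrableOn (fun t : ℝ =>
      t ^ (ν - 1) * Real.exp (-t ^ 2 / 2 - A * t * (x - mu))
        + (A * (x - x₀)) * (t ^ ν * Real.exp (-t ^ 2 / 2 - A * t * (x - mu)))) (Ioi 0) :=
    fun x => (integ_PInt hν1 A mu x).add
      ((integ_PInt (by linarith : (-1:ℝ) < ν) A mu x).const_mul _)
  have hmono : ∀ x1 x2 : ℝ, x1 < x2 → x2 ≤ x₀ → h x1 < h x2 := by
    intro x1 x2 h12 h2x₀
    have hdiff : h x2 - h x1 = ∫ t in Ioi (0:ℝ),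
        ((t ^ (ν - 1) * Real.exp (-t ^ 2 / 2 - A * t * (x2 - mu))
          + (A * (x2 - x₀)) * (t ^ ν * Real.exp (-t ^ 2 / 2 - A * t * (x2 - mu))))
        - (t ^ (ν - 1) * Real.exp (-t ^ 2 / 2 - A * t * (x1 - mu))
          + (A * (x1 - x₀)) * (t ^ ν * Real.exp (-t ^ 2 / 2 - A * t * (x1 - mu))))) := by
      rw [integral_sub (hint_g x2) (hint_g x1), ← hrep, ← hrep]
    have hposdiff : 0 < h x2 - h x1 := by
      rw [hdiff]
      refine integral_Ioi_pos ((hint_g x2).sub (hint_g x1)) fun t ht => ?_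
      have ht0 : (0:ℝ) < t := ht
      have hts : ∀ y : ℝ, t ^ (ν - 1) * Real.exp (-t ^ 2 / 2 - A * t * (y - mu))
          + (A * (y - x₀)) * (t ^ ν * Real.exp (-t ^ 2 / 2 - A * t * (y - mu)))
          = (t ^ (ν - 1) * Real.exp (-t ^ 2 / 2 + A * t * (mu - x₀)))
            * ((1 - A * t * (x₀ - y)) * Real.exp (A * t * (x₀ - y))) := by
        intro y
        rw [show ν = (ν - 1) + 1 from by ring, Real.rpow_add_one (ne_of_gt ht0),
          show -t ^ 2 / 2 - A * t * (y - mu)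
            = (-t ^ 2 / 2 + A * t * (mu - x₀)) + A * t * (x₀ - y) from by ring,
          Real.exp_add]
        ring
      rw [hts x1, hts x2, sub_pos]
      have hC : 0 < t ^ (ν - 1) * Real.exp (-t ^ 2 / 2 + A * t * (mu - x₀)) :=
        mul_pos (Real.rpow_pos_of_pos ht0 _) (Real.exp_pos _)
      apply mul_lt_mul_of_pos_left _ hC
      apply one_sub_mul_exp_lt (mul_nonneg (mul_pos hA ht0).le (by linarith))
      have := mul_pos hA ht0
      nlinarith
    linarith
  -- continuity of h
  have hc1 : Continuous (PInt (ν - 1) A mu) :=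
    continuous_iff_continuousAt.mpr fun x => (hasDerivAt_PInt hν1 hA mu x).continuousAt
  have hc2 : Continuous (PInt ν A mu) :=
    continuous_iff_continuousAt.mpr fun x =>
      (hasDerivAt_PInt (by linarith : (-1:ℝ) < ν) hA mu x).continuousAt
  have hcont : Continuous h := by
    rw [hhdef]
    exact hc1.add ((continuous_const.mul (continuous_id.sub continuous_const)).mul hc2)
  -- a point where h is negative
  set C0 : ℝ := Real.exp 2 / ν + 1 with hC0def
  clear_value C0
  have hC0pos : 0 < C0 := by
    have := Real.exp_pos 2
    have : 0 < Real.exp 2 / ν := div_pos (Real.exp_pos 2) hν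
    rw [hC0def]; linarith
  set x1 : ℝ := min mu x₀ - C0 / A - 1 with hx1def
  clear_value x1
  have hCApos : 0 < C0 / A := div_pos hC0pos hA
  have hx1mu : x1 ≤ mu := by
    have := min_le_left mu x₀
    rw [hx1def]; linarith
  have hx1x₀ : C0 / A + 1 ≤ x₀ - x1 := by
    have := min_le_right mu x₀
    rw [hx1def]; linarith
  have hx1lt : x1 < x₀ := by
    have := hCApos; linarith
  have hhx1neg : h x1 < 0 := by
    have hup := PInt_upper hν hA hx1mu (A := A) (mu := mu)
    have hlow := PInt_lower hν.le hA hx1mu (A := A) (mu := mu)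
    have hexp2 : Real.exp (A * (mu - x1)) / ν
        = Real.exp 2 / ν * Real.exp (A * (mu - x1) - 2) := by
      rw [show A * (mu - x1) = 2 + (A * (mu - x1) - 2) from by ring, Real.exp_add]
      ring
    have hφb : PInt (ν - 1) A mu x1 ≤ C0 * PInt ν A mu x1 := by
      have h1 : Real.exp 2 / ν * Real.exp (A * (mu - x1) - 2)
          ≤ Real.exp 2 / ν * PInt ν A mu x1 :=
        mul_le_mul_of_nonneg_left hlow (div_pos (Real.exp_pos 2) hν).le
      rw [hC0def]
      calc PInt (ν - 1) A mu x1 ≤ Real.exp (A * (mu - x1)) / ν + PInt ν A mu x1 := hup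
        _ = Real.exp 2 / ν * Real.exp (A * (mu - x1) - 2) + PInt ν A mu x1 := by
            rw [hexp2]
        _ ≤ Real.exp 2 / ν * PInt ν A mu x1 + PInt ν A mu x1 := by linarith
        _ = (Real.exp 2 / ν + 1) * PInt ν A mu x1 := by ring
    have hAx : C0 + A ≤ A * (x₀ - x1) := by
      have := mul_le_mul_of_nonneg_left hx1x₀ hA.le
      have heq : A * (C0 / A + 1) = C0 + A := by field_simp
      linarith
    have hψ := hψpos x1
    have : h x1 ≤ (C0 - A * (x₀ - x1)) * PInt ν A mu x1 := by
      rw [hhdef]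
      dsimp only
      nlinarith [hφb, hψ]
    have h5 : (C0 - A * (x₀ - x1)) * PInt ν A mu x1 ≤ -A * PInt ν A mu x1 :=
      mul_le_mul_of_nonneg_right (by linarith) hψ.le
    have h6 : -A * PInt ν A mu x1 < 0 := by nlinarith [mul_pos hA hψ]
    linarith
  -- h x₀ > 0
  have hhx₀pos : 0 < h x₀ := hhpos x₀ le_rfl
  -- existence of a zero
  obtain ⟨b, hbmem, hb0⟩ :=
    intermediate_value_Ioo hx1lt.le hcont.continuousOn (show (0:ℝ) ∈ Ioo (h x1) (h x₀)
      from ⟨hhx1neg, hhx₀pos⟩)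
  -- every zero is < x₀
  have hzero_lt : ∀ y : ℝ, h y = 0 → y < x₀ := by
    intro y hy
    by_contra hyx
    push_neg at hyx
    exact absurd hy (ne_of_gt (hhpos y hyx))
  -- uniqueness
  have huniq : ∀ y z : ℝ, h y = 0 → h z = 0 → y = z := by
    intro y z hy hz
    by_contra hne
    rcases lt_or_gt_of_ne hne with hlt' | hlt'
    · exact absurd (hy.trans hz.symm) (ne_of_lt (hmono y z hlt' (hzero_lt z hz).le))
    · exact absurd (hz.trans hy.symm) (ne_of_lt (hmono z y hlt' (hzero_lt y hy).le))
  -- translate to Hfun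
  have hHzero : ∀ y : ℝ, Hfun lam th mu sig Phi y c = 0 ↔ h y = 0 := by
    intro y
    rw [hH]
    constructor
    · intro hy
      rcases mul_eq_zero.mp hy with h1 | h1
      · exact absurd h1 (ne_of_gt hKdiv)
      · exact h1
    · intro hy; rw [hy, mul_zero]
  refine ⟨hx₀pos, ?_, ?_, ?_⟩
  · intro x hx
    rw [hH]
    exact mul_pos hKdiv (hhpos x hx)
  · exact ⟨b, (hHzero b).mpr hb0, fun y hy => huniq y b ((hHzero y).mp hy) hb0⟩
  · intro y hy
    exact hzero_lt y ((hHzero y).mp hy)
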